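/- For every ϑ ∈ (1,2): the function g_ϑ is convex on [0,∞) with concave derivative, g_ϑ(x) ~ x^ϑ log x / (ϑ(ϑ−1)) as x → ∞, and there exists a constant C_ϑ > 0 such that g_ϑ(x) ≤ C_ϑ f_1(x^ϑ) for all x ≥ 0. -/

import Mathlib

open Filter
open scoped Topology

noncomputable section

/-- `log₊ x = max (log x) 0`. -/
def plog (x : ℝ) : ℝ := max (Real.log x) 0

/-- `f_p(x) = (1 + (log₊ x)^p) * x`. -/
def fp (p x : ℝ) : ℝ := (1 + plog x ^ p) * x

/-- `g_ϑ''(u) = 1/(e(2−ϑ))` for `u ≤ e^{1/(2−ϑ)}` and `u^{ϑ−2} log u` beyond, for `ϑ ∈ (1,2)`. -/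
def gSecond (ϑ u : ℝ) : ℝ :=
  if u ≤ Real.exp (1 / (2 - ϑ)) then 1 / (Real.exp 1 * (2 - ϑ)) else u ^ (ϑ - 2) * Real.log u

/-- `g_ϑ'(t) = ∫_0^t g_ϑ''(u) du`. -/
def gFirst (ϑ t : ℝ) : ℝ := ∫ u in (0:ℝ)..t, gSecond ϑ u

/-- `g_ϑ(x) = ∫_0^x ∫_0^t g_ϑ''(u) du dt`. -/
def gFun (ϑ x : ℝ) : ℝ := ∫ t in (0:ℝ)..x, gFirst ϑ t

namespace G18

/-- the transition point -/
def aa (ϑ : ℝ) : ℝ := Real.exp (1 / (2 - ϑ))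
/-- the constant value -/
def cc (ϑ : ℝ) : ℝ := 1 / (Real.exp 1 * (2 - ϑ))
/-- the upper branch -/
def phi (ϑ u : ℝ) : ℝ := u ^ (ϑ - 2) * Real.log u

variable {ϑ : ℝ}

lemma sub_pos2 (h2 : ϑ < 2) : 0 < 2 - ϑ := by linarith
lemma one_lt_aa (h2 : ϑ < 2) : 1 < aa ϑ := by
  have h2' : 0 < 2 - ϑ := by linarith
  rw [aa, ← Real.exp_zero]
  exact Real.exp_lt_exp.2 (by positivity)
lemma aa_pos (h2 : ϑ < 2) : 0 < aa ϑ := lt_trans one_pos (one_lt_aa h2)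
lemma cc_pos (h2 : ϑ < 2) : 0 < cc ϑ := by
  have := Real.exp_pos 1
  have := sub_pos2 h2
  rw [cc]; positivity
lemma log_aa (h2 : ϑ < 2) : Real.log (aa ϑ) = 1 / (2 - ϑ) := Real.log_exp _
lemma phi_aa (h2 : ϑ < 2) : phi ϑ (aa ϑ) = cc ϑ := by
  have ha := aa_pos h2
  have h2' := sub_pos2 h2
  rw [phi, Real.rpow_def_of_pos ha, log_aa h2]
  have : 1 / (2 - ϑ) * (ϑ - 2) = -1 := by field_simp; ring
  rw [this, Real.exp_neg, cc]
  field_simp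

lemma gSecond_eq_cc {u : ℝ} (hu : u ≤ aa ϑ) : gSecond ϑ u = cc ϑ := if_pos hu
lemma gSecond_eq_phi {u : ℝ} (hu : aa ϑ < u) : gSecond ϑ u = phi ϑ u := if_neg (not_le.2 hu)
lemma gSecond_aa (h2 : ϑ < 2) : gSecond ϑ (aa ϑ) = phi ϑ (aa ϑ) := by
  rw [gSecond_eq_cc le_rfl, phi_aa h2]
lemma gSecond_eq_phi' (h2 : ϑ < 2) {u : ℝ} (hu : aa ϑ ≤ u) : gSecond ϑ u = phi ϑ u := by
  rcases eq_or_lt_of_le hu with h | h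
  · rw [← h]; exact gSecond_aa h2
  · exact gSecond_eq_phi h

lemma hasDerivAt_phi {u : ℝ} (hu : 0 < u) :
    HasDerivAt (phi ϑ) (u ^ (ϑ - 3) * ((ϑ - 2) * Real.log u + 1)) u := by
  have h1 : HasDerivAt (fun v : ℝ => v ^ (ϑ - 2)) ((ϑ - 2) * u ^ (ϑ - 2 - 1)) u :=
    Real.hasDerivAt_rpow_const (Or.inl hu.ne')
  have h2 : HasDerivAt Real.log u⁻¹ u := Real.hasDerivAt_log hu.ne'
  have := h1.mul h2
  refine this.congr_deriv ?_
  have e1 : ϑ - 2 - 1 = ϑ - 3 := by ring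
  have e2 : u ^ (ϑ - 2) * u⁻¹ = u ^ (ϑ - 3) := by
    rw [show ϑ - 3 = ϑ - 2 - 1 from by ring, Real.rpow_sub hu (ϑ - 2) 1, Real.rpow_one,
      div_eq_mul_inv]
  rw [e1, ← e2]
  ring

lemma phi_antitoneOn (h2 : ϑ < 2) : AntitoneOn (phi ϑ) (Set.Ici (aa ϑ)) := by
  have ha := aa_pos h2
  have h2' := sub_pos2 h2
  apply antitoneOn_of_deriv_nonpos (convex_Ici _)
  · intro u hu
    have hu0 : 0 < u := lt_of_lt_of_le ha hu
    exact ((hasDerivAt_phi hu0).continuousAt).continuousWithinAt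
  · intro u hu
    rw [interior_Ici] at hu
    exact ((hasDerivAt_phi (ha.trans hu)).differentiableAt).differentiableWithinAt
  · intro u hu
    rw [interior_Ici] at hu
    have hu0 : 0 < u := ha.trans hu
    rw [(hasDerivAt_phi hu0).deriv]
    have hlog : 1 / (2 - ϑ) ≤ Real.log u := by
      rw [← log_aa h2]
      exact Real.log_le_log (aa_pos h2) hu.le
    have : (ϑ - 2) * Real.log u + 1 ≤ 0 := by
      have : (2 - ϑ) * (1 / (2 - ϑ)) ≤ (2 - ϑ) * Real.log u :=
        mul_le_mul_of_nonneg_left hlog h2'.le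
      rw [mul_one_div, div_self h2'.ne'] at this
      nlinarith
    have hup : (0:ℝ) < u ^ (ϑ - 3) := Real.rpow_pos_of_pos hu0 _
    exact mul_nonpos_of_nonneg_of_nonpos hup.le this

lemma phi_le_cc (h2 : ϑ < 2) {u : ℝ} (hu : aa ϑ ≤ u) : phi ϑ u ≤ cc ϑ := by
  rw [← phi_aa h2]
  exact phi_antitoneOn h2 Set.self_mem_Ici hu hu

lemma gSecond_antitone (h2 : ϑ < 2) : Antitone (gSecond ϑ) := by
  intro u v huv
  by_cases hv : v ≤ aa ϑ
  · rw [gSecond_eq_cc hv, gSecond_eq_cc (huv.trans hv)]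
  · push_neg at hv
    rw [gSecond_eq_phi hv]
    by_cases hu : u ≤ aa ϑ
    · rw [gSecond_eq_cc hu]
      exact phi_le_cc h2 hv.le
    · push_neg at hu
      rw [gSecond_eq_phi hu]
      exact phi_antitoneOn h2 hu.le (hu.le.trans huv) huv

lemma gSecond_nonneg (h2 : ϑ < 2) (u : ℝ) : 0 ≤ gSecond ϑ u := by
  by_cases hu : u ≤ aa ϑ
  · rw [gSecond_eq_cc hu]; exact (cc_pos h2).le
  · push_neg at hu
    rw [gSecond_eq_phi hu]
    have hu1 : 1 < u := (one_lt_aa h2).trans hu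
    have hp := Real.rpow_pos_of_pos (lt_trans one_pos hu1) (ϑ - 2)
    have hl := Real.log_nonneg hu1.le
    exact mul_nonneg hp.le hl

lemma gSecond_continuous (h2 : ϑ < 2) : Continuous (gSecond ϑ) := by
  rw [continuous_iff_continuousAt]
  intro u
  rcases lt_trichotomy u (aa ϑ) with h | h | h
  · have : gSecond ϑ =ᶠ[𝓝 u] fun _ => cc ϑ := by
      filter_upwards [Iio_mem_nhds h] with v hv
      exact gSecond_eq_cc (le_of_lt hv)
    exact (continuousAt_const).congr this.symm
  · subst h
    rw [continuousAt_iff_continuous_left_right]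
    constructor
    · have : ContinuousWithinAt (fun _ => cc ϑ) (Set.Iic (aa ϑ)) (aa ϑ) :=
        continuousWithinAt_const
      apply this.congr
      · intro v hv; exact gSecond_eq_cc hv
      · exact gSecond_eq_cc le_rfl
    · have hc : ContinuousWithinAt (phi ϑ) (Set.Ici (aa ϑ)) (aa ϑ) :=
        ((hasDerivAt_phi (aa_pos h2)).continuousAt).continuousWithinAt
      have := hc.congr (fun v hv => gSecond_eq_phi' h2 hv) (gSecond_aa h2)
      exact this
  · have hu0 : 0 < u := (aa_pos h2).trans h
    have : gSecond ϑ =ᶠ[𝓝 u] phi ϑ := by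
      filter_upwards [Ioi_mem_nhds h] with v hv
      exact gSecond_eq_phi hv
    exact ((hasDerivAt_phi hu0).continuousAt).congr this.symm

open MeasureTheory intervalIntegral in
lemma gSecond_intint (h2 : ϑ < 2) (s t : ℝ) :
    IntervalIntegrable (gSecond ϑ) MeasureTheory.volume s t :=
  (gSecond_continuous h2).intervalIntegrable s t

lemma gFirst_continuous (h2 : ϑ < 2) : Continuous (gFirst ϑ) :=
  intervalIntegral.continuous_primitive (gSecond_intint h2) 0

lemma hasDerivAt_gFirst (h2 : ϑ < 2) (t : ℝ) : HasDerivAt (gFirst ϑ) (gSecond ϑ t) t :=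
  intervalIntegral.integral_hasDerivAt_right (gSecond_intint h2 0 t)
    ((gSecond_continuous h2).stronglyMeasurableAtFilter _ _)
    (gSecond_continuous h2).continuousAt

lemma gFirst_intint (h2 : ϑ < 2) (s t : ℝ) :
    IntervalIntegrable (gFirst ϑ) MeasureTheory.volume s t :=
  (gFirst_continuous h2).intervalIntegrable s t

lemma gFun_continuous (h2 : ϑ < 2) : Continuous (gFun ϑ) :=
  intervalIntegral.continuous_primitive (gFirst_intint h2) 0

lemma hasDerivAt_gFun (h2 : ϑ < 2) (x : ℝ) : HasDerivAt (gFun ϑ) (gFirst ϑ x) x :=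
  intervalIntegral.integral_hasDerivAt_right (gFirst_intint h2 0 x)
    ((gFirst_continuous h2).stronglyMeasurableAtFilter _ _)
    (gFirst_continuous h2).continuousAt

lemma gFirst_monotone (h2 : ϑ < 2) : Monotone (gFirst ϑ) := by
  intro s t hst
  have h := intervalIntegral.integral_add_adjacent_intervals
    (gSecond_intint h2 0 s) (gSecond_intint h2 s t)
  have hnn : 0 ≤ ∫ u in s..t, gSecond ϑ u :=
    intervalIntegral.integral_nonneg hst (fun u _ => gSecond_nonneg h2 u)
  show gFirst ϑ s ≤ gFirst ϑ t
  rw [gFirst, gFirst, ← h]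
  linarith

lemma gFun_convexOn (h1 : 1 < ϑ) (h2 : ϑ < 2) : ConvexOn ℝ (Set.Ici 0) (gFun ϑ) := by
  apply MonotoneOn.convexOn_of_deriv (convex_Ici _) (gFun_continuous h2).continuousOn
  · exact fun x _ => ((hasDerivAt_gFun h2 x).differentiableAt).differentiableWithinAt
  · intro x hx y hy hxy
    rw [(hasDerivAt_gFun h2 x).deriv, (hasDerivAt_gFun h2 y).deriv]
    exact gFirst_monotone h2 hxy

lemma gFirst_concaveOn (h1 : 1 < ϑ) (h2 : ϑ < 2) : ConcaveOn ℝ (Set.Ici 0) (gFirst ϑ) := by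
  apply AntitoneOn.concaveOn_of_deriv (convex_Ici _) (gFirst_continuous h2).continuousOn
  · exact fun x _ => ((hasDerivAt_gFirst h2 x).differentiableAt).differentiableWithinAt
  · intro x hx y hy hxy
    rw [(hasDerivAt_gFirst h2 x).deriv, (hasDerivAt_gFirst h2 y).deriv]
    exact gSecond_antitone h2 hxy

/-- antiderivative of `phi` -/
def PhiF (ϑ t : ℝ) : ℝ := t ^ (ϑ - 1) * Real.log t / (ϑ - 1) - t ^ (ϑ - 1) / (ϑ - 1) ^ 2

/-- antiderivative of `PhiF` -/
def PsiF (ϑ t : ℝ) : ℝ :=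
  t ^ ϑ * Real.log t / (ϑ * (ϑ - 1)) - t ^ ϑ / (ϑ ^ 2 * (ϑ - 1)) - t ^ ϑ / (ϑ * (ϑ - 1) ^ 2)

/-- linear coefficient -/
def Bc (ϑ : ℝ) : ℝ := cc ϑ * aa ϑ - PhiF ϑ (aa ϑ)

/-- constant coefficient -/
def C0 (ϑ : ℝ) : ℝ := gFun ϑ (aa ϑ) - Bc ϑ * aa ϑ - PsiF ϑ (aa ϑ)

lemma hasDerivAt_PhiF (h1 : 1 < ϑ) {t : ℝ} (ht : 0 < t) :
    HasDerivAt (PhiF ϑ) (phi ϑ t) t := by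
  have hθ : ϑ - 1 ≠ 0 := by intro h; linarith [sub_eq_zero.mp h]
  have hr : HasDerivAt (fun v : ℝ => v ^ (ϑ - 1)) ((ϑ - 1) * t ^ (ϑ - 2)) t := by
    have := Real.hasDerivAt_rpow_const (p := ϑ - 1) (Or.inl ht.ne')
    convert this using 2
    rw [show ϑ - 1 - 1 = ϑ - 2 from by ring]
  have hlog : HasDerivAt Real.log t⁻¹ t := Real.hasDerivAt_log ht.ne'
  have h := (((hr.mul hlog).div_const (ϑ - 1)).sub (hr.div_const ((ϑ - 1) ^ 2)))
  refine h.congr_deriv ?_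
  have e2 : t ^ (ϑ - 1) * t⁻¹ = t ^ (ϑ - 2) := by
    rw [show ϑ - 2 = ϑ - 1 - 1 from by ring, Real.rpow_sub ht (ϑ - 1) 1, Real.rpow_one,
      div_eq_mul_inv]
  rw [phi, e2]
  field_simp
  ring

lemma hasDerivAt_PsiF (h1 : 1 < ϑ) {t : ℝ} (ht : 0 < t) :
    HasDerivAt (PsiF ϑ) (PhiF ϑ t) t := by
  have hθ : ϑ - 1 ≠ 0 := by intro h; linarith [sub_eq_zero.mp h]
  have hθ0 : ϑ ≠ 0 := by linarith
  have hr : HasDerivAt (fun v : ℝ => v ^ ϑ) (ϑ * t ^ (ϑ - 1)) t :=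
    Real.hasDerivAt_rpow_const (p := ϑ) (Or.inl ht.ne')
  have hlog : HasDerivAt Real.log t⁻¹ t := Real.hasDerivAt_log ht.ne'
  have h := (((hr.mul hlog).div_const (ϑ * (ϑ - 1))).sub
      (hr.div_const (ϑ ^ 2 * (ϑ - 1)))).sub (hr.div_const (ϑ * (ϑ - 1) ^ 2))
  refine h.congr_deriv ?_
  have e2 : t ^ ϑ * t⁻¹ = t ^ (ϑ - 1) := by
    rw [show ϑ - 1 = ϑ - 1 from rfl, Real.rpow_sub ht ϑ 1, Real.rpow_one, div_eq_mul_inv]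
  rw [PhiF, ← e2]
  field_simp
  ring

lemma gFirst_small (h2 : ϑ < 2) {t : ℝ} (ht0 : 0 ≤ t) (ht : t ≤ aa ϑ) :
    gFirst ϑ t = cc ϑ * t := by
  rw [gFirst]
  have : ∀ u ∈ Set.uIcc (0:ℝ) t, gSecond ϑ u = cc ϑ := by
    intro u hu
    rw [Set.uIcc_of_le ht0] at hu
    exact gSecond_eq_cc (hu.2.trans ht)
  rw [intervalIntegral.integral_congr this, intervalIntegral.integral_const, smul_eq_mul]
  ring

lemma gFun_small (h2 : ϑ < 2) {x : ℝ} (hx0 : 0 ≤ x) (hx : x ≤ aa ϑ) :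
    gFun ϑ x = cc ϑ * (x ^ (2:ℕ) / 2) := by
  rw [gFun]
  have : ∀ t ∈ Set.uIcc (0:ℝ) x, gFirst ϑ t = cc ϑ * t := by
    intro t ht
    rw [Set.uIcc_of_le hx0] at ht
    exact gFirst_small h2 ht.1 (ht.2.trans hx)
  rw [intervalIntegral.integral_congr this, intervalIntegral.integral_const_mul,
    integral_id]
  norm_num

lemma gFirst_aa (h2 : ϑ < 2) : gFirst ϑ (aa ϑ) = cc ϑ * aa ϑ :=
  gFirst_small h2 (aa_pos h2).le le_rfl

lemma phi_continuousOn (h2 : ϑ < 2) {t : ℝ} (ht : aa ϑ ≤ t) :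
    ContinuousOn (phi ϑ) (Set.uIcc (aa ϑ) t) := by
  intro u hu
  rw [Set.uIcc_of_le ht] at hu
  exact ((hasDerivAt_phi ((aa_pos h2).trans_le hu.1)).continuousAt).continuousWithinAt

lemma gFirst_large (h1 : 1 < ϑ) (h2 : ϑ < 2) {t : ℝ} (ht : aa ϑ ≤ t) :
    gFirst ϑ t = Bc ϑ + PhiF ϑ t := by
  have hadj := intervalIntegral.integral_add_adjacent_intervals
    (gSecond_intint h2 0 (aa ϑ)) (gSecond_intint h2 (aa ϑ) t)
  have hcongr : ∀ u ∈ Set.uIcc (aa ϑ) t, gSecond ϑ u = phi ϑ u := by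
    intro u hu
    rw [Set.uIcc_of_le ht] at hu
    exact gSecond_eq_phi' h2 hu.1
  have hftc : (∫ u in (aa ϑ)..t, phi ϑ u) = PhiF ϑ t - PhiF ϑ (aa ϑ) := by
    apply intervalIntegral.integral_eq_sub_of_hasDerivAt
    · intro u hu
      rw [Set.uIcc_of_le ht] at hu
      exact hasDerivAt_PhiF h1 ((aa_pos h2).trans_le hu.1)
    · exact (phi_continuousOn h2 ht).intervalIntegrable
  have : gFirst ϑ t = gFirst ϑ (aa ϑ) + ∫ u in (aa ϑ)..t, gSecond ϑ u := by
    rw [gFirst, gFirst, ← hadj]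
  rw [this, intervalIntegral.integral_congr hcongr, hftc, gFirst_aa h2, Bc]
  ring

lemma gFun_large (h1 : 1 < ϑ) (h2 : ϑ < 2) {x : ℝ} (hx : aa ϑ ≤ x) :
    gFun ϑ x = C0 ϑ + Bc ϑ * x + PsiF ϑ x := by
  have hadj := intervalIntegral.integral_add_adjacent_intervals
    (gFirst_intint h2 0 (aa ϑ)) (gFirst_intint h2 (aa ϑ) x)
  have hftc : (∫ t in (aa ϑ)..x, gFirst ϑ t)
      = (Bc ϑ * x + PsiF ϑ x) - (Bc ϑ * aa ϑ + PsiF ϑ (aa ϑ)) := by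
    apply intervalIntegral.integral_eq_sub_of_hasDerivAt
    · intro t htm
      rw [Set.uIcc_of_le hx] at htm
      have hd : HasDerivAt (fun t => Bc ϑ * t + PsiF ϑ t) (Bc ϑ + PhiF ϑ t) t := by
        have := ((hasDerivAt_id t).const_mul (Bc ϑ)).add
          (hasDerivAt_PsiF h1 ((aa_pos h2).trans_le htm.1))
        exact this.congr_deriv (by ring)
      rw [gFirst_large h1 h2 htm.1]
      exact hd
    · exact gFirst_intint h2 _ _
  have : gFun ϑ x = gFun ϑ (aa ϑ) + ∫ t in (aa ϑ)..x, gFirst ϑ t := by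
    rw [gFun, gFun, ← hadj]
  rw [this, hftc, C0]
  ring

lemma tendsto_ratio (h1 : 1 < ϑ) (h2 : ϑ < 2) :
    Tendsto (fun x => gFun ϑ x / (x ^ ϑ * Real.log x / (ϑ * (ϑ - 1)))) atTop (𝓝 1) := by
  have hθ1 : (0:ℝ) < ϑ - 1 := by linarith
  have hθ0 : (0:ℝ) < ϑ := by linarith
  -- auxiliary limits
  have hlog : Tendsto Real.log atTop atTop := Real.tendsto_log_atTop
  have hPL : Tendsto (fun x : ℝ => x ^ ϑ * Real.log x) atTop atTop :=
    (tendsto_rpow_atTop hθ0).atTop_mul_atTop₀ hlog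
  have hQL : Tendsto (fun x : ℝ => x ^ (ϑ - 1) * Real.log x) atTop atTop :=
    (tendsto_rpow_atTop hθ1).atTop_mul_atTop₀ hlog
  have t1 : Tendsto (fun x : ℝ => C0 ϑ * (ϑ * (ϑ - 1)) / (x ^ ϑ * Real.log x))
      atTop (𝓝 0) := tendsto_const_nhds.div_atTop hPL
  have t2 : Tendsto (fun x : ℝ => Bc ϑ * (ϑ * (ϑ - 1)) / (x ^ (ϑ - 1) * Real.log x))
      atTop (𝓝 0) := tendsto_const_nhds.div_atTop hQL
  have t3 : Tendsto (fun x : ℝ => (1 / ϑ) / Real.log x) atTop (𝓝 0) :=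
    tendsto_const_nhds.div_atTop hlog
  have t4 : Tendsto (fun x : ℝ => (1 / (ϑ - 1)) / Real.log x) atTop (𝓝 0) :=
    tendsto_const_nhds.div_atTop hlog
  have hT : Tendsto (fun x : ℝ =>
      C0 ϑ * (ϑ * (ϑ - 1)) / (x ^ ϑ * Real.log x)
      + Bc ϑ * (ϑ * (ϑ - 1)) / (x ^ (ϑ - 1) * Real.log x)
      + (1 - (1 / ϑ) / Real.log x - (1 / (ϑ - 1)) / Real.log x)) atTop (𝓝 1) := by
    have := (t1.add t2).add ((tendsto_const_nhds (x := (1:ℝ)).sub t3).sub t4)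
    simpa using this
  apply hT.congr'
  filter_upwards [eventually_ge_atTop (aa ϑ)] with x hx
  have hx1 : 1 < x := (one_lt_aa h2).trans_le hx
  have hx0 : 0 < x := lt_trans one_pos hx1
  have hL : 0 < Real.log x := Real.log_pos hx1
  have hP : 0 < x ^ ϑ := Real.rpow_pos_of_pos hx0 _
  have hQ : 0 < x ^ (ϑ - 1) := Real.rpow_pos_of_pos hx0 _
  have hPQ : x ^ ϑ = x ^ (ϑ - 1) * x := by
    have h := Real.rpow_add hx0 (ϑ - 1) 1
    rw [Real.rpow_one] at h
    rw [← h]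
    congr 1
    ring
  rw [gFun_large h1 h2 hx, PsiF]
  rw [hPQ]
  field_simp

lemma exists_bound (h1 : 1 < ϑ) (h2 : ϑ < 2) :
    ∃ C : ℝ, 0 < C ∧ ∀ x : ℝ, 0 ≤ x → gFun ϑ x ≤ C * fp 1 (x ^ ϑ) := by
  have hθ1 : (0:ℝ) < ϑ - 1 := by linarith
  have hθ0 : (0:ℝ) < ϑ := by linarith
  have hcc := cc_pos h2
  have ha1 := one_lt_aa h2
  have ha0 := aa_pos h2
  have haP : (0:ℝ) < aa ϑ ^ ((2:ℝ) - ϑ) := Real.rpow_pos_of_pos ha0 _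
  set K : ℝ := 1 / (ϑ ^ 2 * (ϑ - 1)) with hK
  have hKpos : 0 < K := by rw [hK]; positivity
  have hccaa : 0 < cc ϑ * aa ϑ ^ ((2:ℝ) - ϑ) / 2 := by positivity
  refine ⟨|C0 ϑ| + |Bc ϑ| + K + cc ϑ * aa ϑ ^ ((2:ℝ) - ϑ) / 2 + 1,
    by linarith [abs_nonneg (C0 ϑ), abs_nonneg (Bc ϑ)], ?_⟩
  set C : ℝ := |C0 ϑ| + |Bc ϑ| + K + cc ϑ * aa ϑ ^ ((2:ℝ) - ϑ) / 2 + 1 with hC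
  clear_value C
  intro x hx0
  rcases eq_or_lt_of_le hx0 with hx0' | hx0'
  · -- x = 0
    rw [← hx0', Real.zero_rpow hθ0.ne']
    have : gFun ϑ 0 = 0 := intervalIntegral.integral_same
    rw [this, fp]
    simp
  -- x > 0
  have hfp : fp 1 (x ^ ϑ) = (1 + plog (x ^ ϑ)) * x ^ ϑ := by
    rw [fp, Real.rpow_one]
  have hplog0 : 0 ≤ plog (x ^ ϑ) := le_max_right _ _
  have hxP : (0:ℝ) < x ^ ϑ := Real.rpow_pos_of_pos hx0' _
  have hCbig : cc ϑ * aa ϑ ^ ((2:ℝ) - ϑ) / 2 ≤ C := by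
    rw [hC]
    have : (0:ℝ) ≤ |C0 ϑ| := abs_nonneg _
    have : (0:ℝ) ≤ |Bc ϑ| := abs_nonneg _
    linarith
  rcases le_or_gt x (aa ϑ) with hxa | hxa
  · -- small x
    rw [gFun_small h2 hx0 hxa, hfp]
    have e : x ^ (2:ℕ) = x ^ ((2:ℝ) - ϑ) * x ^ ϑ := by
      rw [← Real.rpow_add hx0', ← Real.rpow_natCast x 2]
      congr 1
      push_cast
      ring
    have hle : x ^ ((2:ℝ) - ϑ) ≤ aa ϑ ^ ((2:ℝ) - ϑ) :=
      Real.rpow_le_rpow hx0 hxa (by linarith)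
    have hxm : (0:ℝ) ≤ x ^ ((2:ℝ) - ϑ) := (Real.rpow_pos_of_pos hx0' _).le
    have step1 : cc ϑ * (x ^ (2:ℕ) / 2) ≤ cc ϑ * aa ϑ ^ ((2:ℝ) - ϑ) / 2 * x ^ ϑ := by
      rw [e]
      have := mul_le_mul_of_nonneg_right hle hxP.le
      nlinarith
    have step2 : cc ϑ * aa ϑ ^ ((2:ℝ) - ϑ) / 2 * x ^ ϑ ≤ C * ((1 + plog (x ^ ϑ)) * x ^ ϑ) := by
      have h1' : cc ϑ * aa ϑ ^ ((2:ℝ) - ϑ) / 2 ≤ C * (1 + plog (x ^ ϑ)) := by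
        have hC1 : C * 1 ≤ C * (1 + plog (x ^ ϑ)) := by
          apply mul_le_mul_of_nonneg_left (by linarith)
          rw [hC]
          linarith [abs_nonneg (C0 ϑ), abs_nonneg (Bc ϑ)]
        rw [mul_one] at hC1
        linarith
      calc cc ϑ * aa ϑ ^ ((2:ℝ) - ϑ) / 2 * x ^ ϑ ≤ C * (1 + plog (x ^ ϑ)) * x ^ ϑ :=
            mul_le_mul_of_nonneg_right h1' hxP.le
        _ = C * ((1 + plog (x ^ ϑ)) * x ^ ϑ) := by ring
    linarith
  · -- large x
    have hxa' : aa ϑ ≤ x := hxa.le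
    have hx1 : 1 < x := ha1.trans hxa
    have hlogx : 0 ≤ Real.log x := (Real.log_pos hx1).le
    have hplog : plog (x ^ ϑ) = ϑ * Real.log x := by
      rw [plog, Real.log_rpow hx0', max_eq_left (by positivity)]
    have hone_le : (1:ℝ) ≤ x ^ ϑ := Real.one_le_rpow hx1.le hθ0.le
    have hxle : x ≤ x ^ ϑ := by
      have := Real.rpow_le_rpow_of_exponent_le hx1.le h1.le
      rwa [Real.rpow_one] at this
    have hPsi : PsiF ϑ x ≤ K * (x ^ ϑ * (ϑ * Real.log x)) := by
      rw [PsiF, hK]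
      have h2' : 0 ≤ x ^ ϑ / (ϑ ^ 2 * (ϑ - 1)) := by positivity
      have h3' : 0 ≤ x ^ ϑ / (ϑ * (ϑ - 1) ^ 2) := by positivity
      have : x ^ ϑ * Real.log x / (ϑ * (ϑ - 1)) = 1 / (ϑ ^ 2 * (ϑ - 1)) * (x ^ ϑ * (ϑ * Real.log x)) := by
        field_simp
      linarith [this.le]
    have hgf := gFun_large h1 h2 hxa'
    rw [hgf, hfp, hplog]
    have b1 : C0 ϑ ≤ |C0 ϑ| * x ^ ϑ := by
      calc C0 ϑ ≤ |C0 ϑ| := le_abs_self _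
        _ = |C0 ϑ| * 1 := (mul_one _).symm
        _ ≤ |C0 ϑ| * x ^ ϑ := mul_le_mul_of_nonneg_left hone_le (abs_nonneg _)
    have b2 : Bc ϑ * x ≤ |Bc ϑ| * x ^ ϑ := by
      calc Bc ϑ * x ≤ |Bc ϑ| * x := mul_le_mul_of_nonneg_right (le_abs_self _) hx0
        _ ≤ |Bc ϑ| * x ^ ϑ := mul_le_mul_of_nonneg_left hxle (abs_nonneg _)
    have hCK : |C0 ϑ| + |Bc ϑ| ≤ C ∧ K ≤ C := by
      constructor <;> (rw [hC]; linarith [abs_nonneg (C0 ϑ), abs_nonneg (Bc ϑ)])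
    have hL : 0 ≤ ϑ * Real.log x := by positivity
    have expand : C * ((1 + ϑ * Real.log x) * x ^ ϑ)
        = C * x ^ ϑ + C * (x ^ ϑ * (ϑ * Real.log x)) := by ring
    rw [expand]
    have c1 : C0 ϑ + Bc ϑ * x ≤ C * x ^ ϑ := by
      have : (|C0 ϑ| + |Bc ϑ|) * x ^ ϑ ≤ C * x ^ ϑ :=
        mul_le_mul_of_nonneg_right hCK.1 hxP.le
      nlinarith
    have c2 : PsiF ϑ x ≤ C * (x ^ ϑ * (ϑ * Real.log x)) := by
      have hm : 0 ≤ x ^ ϑ * (ϑ * Real.log x) := by positivity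
      calc PsiF ϑ x ≤ K * (x ^ ϑ * (ϑ * Real.log x)) := hPsi
        _ ≤ C * (x ^ ϑ * (ϑ * Real.log x)) := mul_le_mul_of_nonneg_right hCK.2 hm
    linarith

end G18

/-- for `ϑ ∈ (1,2)`: `g_ϑ` is convex on `[0,∞)` with (concave) derivative
`g_ϑ'`, `g_ϑ(x) ∼ x^ϑ log x / (ϑ(ϑ−1))` as `x → ∞`, and there is `C_ϑ > 0` with
`g_ϑ(x) ≤ C_ϑ f_1(x^ϑ)` for all `x ≥ 0`. -/
theorem gFun_properties (ϑ : ℝ) (h1 : 1 < ϑ) (h2 : ϑ < 2) :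
    ConvexOn ℝ (Set.Ici 0) (gFun ϑ) ∧
    (∀ x : ℝ, 0 < x → HasDerivAt (gFun ϑ) (gFirst ϑ x) x) ∧
    ConcaveOn ℝ (Set.Ici 0) (gFirst ϑ) ∧
    Tendsto (fun x => gFun ϑ x / (x ^ ϑ * Real.log x / (ϑ * (ϑ - 1)))) atTop (𝓝 1) ∧
    ∃ C : ℝ, 0 < C ∧ ∀ x : ℝ, 0 ≤ x → gFun ϑ x ≤ C * fp 1 (x ^ ϑ) := by
  exact ⟨G18.gFun_convexOn h1 h2, fun x _ => G18.hasDerivAt_gFun h2 x,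
    G18.gFirst_concaveOn h1 h2, G18.tendsto_ratio h1 h2, G18.exists_bound h1 h2⟩
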